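/- (Mixed Galerkin reformulation of DPG.) Let U_h ⊆ U be a finite-dimensional subspace and l : V → ℂ a bounded antilinear functional. A pair (u_h, ψ) ∈ U_h × V satisfies the mixed system (ψ, v)_V + b(u_h, v) = l(v) for all v ∈ V and b(w_h, ψ) = 0 for all w_h ∈ U_h, if and only if ψ is the Riesz representative of the residual at u_h (i.e., (ψ, v)_V = l(v) − b(u_h, v) for all v ∈ V) and u_h minimizes w_h ↦ ‖ψ(w_h)‖_V over U_h, where ψ(w) ∈ V is the unique element with (ψ(w), v)_V = l(v) − b(w, v) for all v ∈ V. -/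

import Mathlib

/-- (Mixed Galerkin reformulation of DPG.) Let `U_h ⊆ U` be a
finite-dimensional subspace and `l : V → ℂ` a bounded antilinear functional. For `w ∈ U`
let `Ψ(w) ∈ V` denote the Riesz representative of the residual at `w`, i.e.
`(Ψ(w), v)_V = l(v) − b(w, v)` for all `v ∈ V`. A pair `(u_h, ψ) ∈ U_h × V` satisfies the
mixed system `(ψ, v)_V + b(u_h, v) = l(v)` for all `v ∈ V` and `b(w_h, ψ) = 0` for all
`w_h ∈ U_h`, iff `ψ` is the Riesz representative of the residual at `u_h` and `u_h`
minimizes `w_h ↦ ‖Ψ(w_h)‖_V` over `U_h`. The inner product `(w, v)_V`, linear in the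
first slot, is `⟪v, w⟫_ℂ` in Mathlib's convention. -/
theorem dpg_mixed_galerkin_reformulation
    {U V : Type*}
    [NormedAddCommGroup U] [InnerProductSpace ℂ U] [CompleteSpace U]
    [NormedAddCommGroup V] [InnerProductSpace ℂ V] [CompleteSpace V]
    (b : U →ₗ[ℂ] V →ₗ⋆[ℂ] ℂ)
    (M : ℝ) (hM : 0 < M)
    (hb : ∀ (u : U) (v : V), ‖b u v‖ ≤ M * ‖u‖ * ‖v‖)
    (Uh : Submodule ℂ U) [FiniteDimensional ℂ Uh]
    (l : V →L⋆[ℂ] ℂ)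
    (Ψ : U → V) (hΨ : ∀ (w : U) (v : V), (inner ℂ v (Ψ w) : ℂ) = l v - b w v)
    (uh : U) (huh : uh ∈ Uh) (ψ : V) :
    ((∀ v : V, (inner ℂ v ψ : ℂ) + b uh v = l v) ∧ (∀ w ∈ Uh, b w ψ = 0)) ↔
      ((∀ v : V, (inner ℂ v ψ : ℂ) = l v - b uh v) ∧
        (∀ w ∈ Uh, ‖Ψ uh‖ ≤ ‖Ψ w‖)) := by
  have hfirst : (∀ v : V, (inner ℂ v ψ : ℂ) + b uh v = l v) ↔
      (∀ v : V, (inner ℂ v ψ : ℂ) = l v - b uh v) := by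
    constructor <;> intro h v <;> linear_combination h v
  rw [hfirst]
  constructor
  · rintro ⟨h1, h2⟩
    refine ⟨h1, ?_⟩
    have hψΨ : ψ = Ψ uh := ext_inner_left ℂ fun v => by rw [h1 v, hΨ]
    intro w hw
    set e := ψ - Ψ w with he
    have hev : ∀ v : V, (inner ℂ v e : ℂ) = b (w - uh) v := by
      intro v
      rw [he, inner_sub_right, h1 v, hΨ, map_sub]
      simp only [LinearMap.sub_apply]
      ring
    have horth : (inner ℂ ψ e : ℂ) = 0 := by
      rw [hev ψ]
      exact h2 _ (Uh.sub_mem hw huh)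
    have hΨw : Ψ w = ψ - e := by rw [he]; abel
    rw [← hψΨ, hΨw]
    have hsq : ‖ψ‖ ^ 2 ≤ ‖ψ - e‖ ^ 2 := by
      rw [norm_sub_sq (𝕜 := ℂ), horth]
      simp only [map_zero]
      nlinarith [sq_nonneg ‖e‖]
    exact (pow_le_pow_iff_left₀ (norm_nonneg _) (norm_nonneg _) two_ne_zero).mp hsq
  · rintro ⟨h1, hmin⟩
    refine ⟨h1, ?_⟩
    have hψΨ : ψ = Ψ uh := ext_inner_left ℂ fun v => by rw [h1 v, hΨ]
    intro w hw
    set e := ψ - Ψ (uh + w) with he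
    have hev : ∀ v : V, (inner ℂ v e : ℂ) = b w v := by
      intro v
      rw [he, inner_sub_right, h1 v, hΨ, map_add]
      simp only [LinearMap.add_apply]
      ring
    have key : ∀ t : ℂ, Ψ (uh + t • w) = ψ - t • e := by
      intro t
      refine (ext_inner_left ℂ fun v => ?_).symm
      rw [inner_sub_right, inner_smul_right, hev v, h1 v, hΨ, map_add, map_smul]
      simp only [LinearMap.add_apply, LinearMap.smul_apply, smul_eq_mul]
      ring
    have hle : ∀ t : ℂ, ‖ψ‖ ≤ ‖ψ - t • e‖ := by
      intro t
      calc ‖ψ‖ = ‖Ψ uh‖ := by rw [hψΨ]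
        _ ≤ ‖Ψ (uh + t • w)‖ := hmin _ (Uh.add_mem huh (Uh.smul_mem t hw))
        _ = ‖ψ - t • e‖ := by rw [key t]
    set c : ℂ := inner ℂ ψ e with hc
    have hbwψ : b w ψ = c := (hev ψ).symm
    rw [hbwψ]
    by_contra hc0
    set s : ℝ := 1 / (‖e‖ ^ 2 + 1) with hs
    have hspos : 0 < s := by positivity
    have hkey : ∀ t : ℂ, (0:ℝ) ≤ - 2 * (t * c).re + ‖t‖ ^ 2 * ‖e‖ ^ 2 := by
      intro t
      have h := hle t
      have hsq : ‖ψ‖ ^ 2 ≤ ‖ψ - t • e‖ ^ 2 :=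
        pow_le_pow_left₀ (norm_nonneg _) h 2
      rw [norm_sub_sq (𝕜 := ℂ), inner_smul_right, ← hc, norm_smul] at hsq
      have hre : (RCLike.re (t * c) : ℝ) = (t * c).re := rfl
      nlinarith [hsq]
    have h2 := hkey ((s : ℂ) * (starRingEnd ℂ) c)
    have hre : (((s : ℂ) * (starRingEnd ℂ) c) * c).re = s * ‖c‖ ^ 2 := by
      rw [mul_assoc, ← Complex.normSq_eq_conj_mul_self, ← Complex.ofReal_mul]
      simp [Complex.normSq_eq_norm_sq, ← Complex.ofReal_pow]
    have hnt : ‖(s : ℂ) * (starRingEnd ℂ) c‖ = s * ‖c‖ := by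
      rw [norm_mul]
      simp [abs_of_pos hspos]
    rw [hre, hnt] at h2
    have hcpos : 0 < ‖c‖ := norm_pos_iff.mpr hc0
    have hslt : s * ‖e‖ ^ 2 < 2 := by
      rw [hs, div_mul_eq_mul_div, div_lt_iff₀ (by positivity)]
      nlinarith [sq_nonneg ‖e‖]
    nlinarith [sq_nonneg ‖c‖, mul_pos hspos (mul_pos hcpos hcpos)]
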